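/- If H_{r-1} is a parity check matrix of a binary linear code with minimum distance 3, then the code with parity check matrix H_r obtained by the doubling construction also has minimum distance 3. -/

import Mathlib

/-- The doubling construction: `H_r = [[0…0 | 1…1], [H | H]]`. -/
def doubling {r n : ℕ} (H : Matrix (Fin r) (Fin n) (ZMod 2)) :
    Matrix (Unit ⊕ Fin r) (Fin n ⊕ Fin n) (ZMod 2) :=
  Matrix.of fun i j =>
    match i, j with
    | Sum.inl _, Sum.inl _ => 0
    | Sum.inl _, Sum.inr _ => 1
    | Sum.inr i, Sum.inl j => H i j
    | Sum.inr i, Sum.inr j => H i j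

lemma hn_sum {n : ℕ} (y : Fin n ⊕ Fin n → ZMod 2) :
    hammingNorm y = hammingNorm (y ∘ Sum.inl) + hammingNorm (y ∘ Sum.inr) := by
  classical
  simp only [hammingNorm, Finset.card_filter, Fintype.sum_sum_type, Function.comp]

lemma sum_eq_norm {n : ℕ} (a : Fin n → ZMod 2) :
    (∑ j, a j) = (hammingNorm a : ZMod 2) := by
  classical
  rw [hammingNorm, Finset.card_filter]
  push_cast
  apply Finset.sum_congr rfl
  intro j _
  rcases (by decide : ∀ z : ZMod 2, z = 0 ∨ z = 1) (a j) with h | h <;> simp [h]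

lemma hn_add_le {n : ℕ} (a b : Fin n → ZMod 2) :
    hammingNorm (a + b) ≤ hammingNorm a + hammingNorm b := by
  classical
  simp only [hammingNorm]
  refine le_trans (Finset.card_le_card (t := Finset.filter (fun j => a j ≠ 0) Finset.univ
    ∪ Finset.filter (fun j => b j ≠ 0) Finset.univ) ?_) (Finset.card_union_le _ _)
  intro j hj
  simp only [Finset.mem_filter, Finset.mem_univ, true_and, Finset.mem_union] at *
  by_contra hc
  push_neg at hc
  simp [hc.1, hc.2] at hj

/-- If the code with parity check matrix `H` has minimum distance exactly 3,
then the doubled code also has minimum distance exactly 3. -/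
theorem stmt_1 {r n : ℕ} (H : Matrix (Fin r) (Fin n) (ZMod 2))
    (hd1 : ∀ x : Fin n → ZMod 2, Matrix.mulVec H x = 0 → x ≠ 0 → 3 ≤ hammingNorm x)
    (hd2 : ∃ x : Fin n → ZMod 2, Matrix.mulVec H x = 0 ∧ x ≠ 0 ∧ hammingNorm x = 3) :
    (∀ y : Fin n ⊕ Fin n → ZMod 2,
        Matrix.mulVec (doubling H) y = 0 → y ≠ 0 → 3 ≤ hammingNorm y) ∧
    (∃ y : Fin n ⊕ Fin n → ZMod 2,
        Matrix.mulVec (doubling H) y = 0 ∧ y ≠ 0 ∧ hammingNorm y = 3) := by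
  classical
  constructor
  · intro y hy hy0
    set a := y ∘ Sum.inl with ha
    set b := y ∘ Sum.inr with hb
    have hrow0 : (∑ j, b j) = 0 := by
      have := congrFun hy (Sum.inl ())
      simpa [Matrix.mulVec, dotProduct, doubling, Fintype.sum_sum_type, hb] using this
    have hrows : Matrix.mulVec H (a + b) = 0 := by
      funext i
      have := congrFun hy (Sum.inr i)
      simp only [Matrix.mulVec, dotProduct, doubling, Fintype.sum_sum_type,
        Matrix.of_apply, Pi.zero_apply] at this ⊢
      simp only [Pi.add_apply, mul_add]
      rw [Finset.sum_add_distrib]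
      simpa [ha, hb] using this
    rw [hn_sum y]
    by_cases hab : a + b = 0
    · have hba : b = a := by
        funext j
        have h1 : a j + b j = 0 := congrFun hab j
        have h2 : b j = -(a j) := eq_neg_of_add_eq_zero_right h1
        rw [h2, CharTwo.neg_eq]
      have ha0 : a ≠ 0 := by
        intro h
        apply hy0
        funext j
        cases j with
        | inl j => exact congrFun h j
        | inr j => rw [show y (Sum.inr j) = b j from rfl, hba, h]; rfl
      have hpar : (hammingNorm a : ZMod 2) = 0 := by
        rw [← sum_eq_norm]
        calc (∑ j, a j) = ∑ j, b j := by rw [hba]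
        _ = 0 := hrow0
      have hdvd : 2 ∣ hammingNorm a := by
        rwa [ZMod.natCast_eq_zero_iff] at hpar
      have hpos : 0 < hammingNorm a := hammingNorm_pos_iff.mpr ha0
      have h2le : 2 ≤ hammingNorm a := Nat.le_of_dvd hpos hdvd
      show 3 ≤ hammingNorm a + hammingNorm b
      rw [hba]
      omega
    · have h3 : 3 ≤ hammingNorm (a + b) := hd1 _ hrows hab
      exact le_trans h3 (hn_add_le a b)
  · obtain ⟨x, hx, hx0, hx3⟩ := hd2
    refine ⟨Sum.elim x 0, ?_, ?_, ?_⟩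
    · funext i
      cases i with
      | inl u =>
        simp [Matrix.mulVec, dotProduct, doubling, Fintype.sum_sum_type]
      | inr i =>
        have := congrFun hx i
        simp only [Matrix.mulVec, dotProduct, Pi.zero_apply] at this
        simpa [Matrix.mulVec, dotProduct, doubling, Fintype.sum_sum_type] using this
    · intro hc
      apply hx0
      funext j
      exact congrFun hc (Sum.inl j)
    · rw [hn_sum]
      have h1 : (Sum.elim x (0 : Fin n → ZMod 2)) ∘ Sum.inl = x := rfl
      have h2 : (Sum.elim x (0 : Fin n → ZMod 2)) ∘ Sum.inr = 0 := rfl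
      rw [h1, h2, hammingNorm_zero, hx3]
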